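/- arXiv:1608.00790 — 2 statements merged into one kernel-verified Lean document; each statement's English description precedes it below -/
import Mathlib

section
/- Let $Q(z) = -e^{-i\psi}\frac{(e^{i\psi}+z)^2}{z^2(z-r)(z-1/r)}$ for $r>0$ and $\psi\in\mathbb{R}$. Then for every $\theta\in\mathbb{R}$ with $e^{i\theta}\neq r$, the value $Q(e^{i\theta})\cdot(ie^{i\theta})^2$ is a nonpositive real number; i.e., $Q(e^{i\theta})e^{2i\theta}\geq 0$ as a real number. -/
open Complex

/-- Admissibility of the growth quadratic differential on the unit circle:
`Q(e^{iθ}) e^{2iθ}` is a nonnegative real number. -/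
theorem stmt0 (r ψ θ : ℝ) (hr : 0 < r) (hr1 : r ≠ 1)
    (hθ : Complex.exp (θ * Complex.I) ≠ (r : ℂ)) :
    ∃ t : ℝ, 0 ≤ t ∧
      (-(Complex.exp (-(ψ : ℂ) * Complex.I)) *
          (Complex.exp ((ψ : ℂ) * Complex.I) + Complex.exp (θ * Complex.I)) ^ 2 /
          ((Complex.exp (θ * Complex.I)) ^ 2 *
            (Complex.exp (θ * Complex.I) - (r : ℂ)) *
            (Complex.exp (θ * Complex.I) - 1 / (r : ℂ)))) *
        Complex.exp (2 * θ * Complex.I) = (t : ℂ) := by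
  set z : ℂ := Complex.exp (θ * Complex.I) with hzdef
  set w : ℂ := Complex.exp ((ψ : ℂ) * Complex.I) with hwdef
  have habsz : ‖z‖ = 1 := Complex.norm_exp_ofReal_mul_I θ
  have habsw : ‖w‖ = 1 := Complex.norm_exp_ofReal_mul_I ψ
  have hz0 : z ≠ 0 := Complex.exp_ne_zero _
  have hw0 : w ≠ 0 := Complex.exp_ne_zero _
  have hr0 : (r : ℂ) ≠ 0 := by exact_mod_cast hr.ne'
  have hzr : z - (r : ℂ) ≠ 0 := sub_ne_zero.mpr hθ
  have hz1r : z - 1 / (r : ℂ) ≠ 0 := by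
    intro h
    have hz : z = 1 / (r : ℂ) := by linear_combination h
    have : (1 : ℝ) = 1 / r := by
      have := congrArg (‖·‖) hz
      rwa [habsz, norm_div, norm_one, Complex.norm_real, Real.norm_of_nonneg hr.le] at this
    have : r = 1 := by field_simp at this; linarith
    exact hr1 this
  -- conjugates
  have hzc : (starRingEnd ℂ) z = z⁻¹ := by
    have := Complex.mul_conj z
    rw [Complex.normSq_eq_norm_sq, habsz, one_pow, Complex.ofReal_one] at this
    field_simp at this ⊢
    linear_combination this
  have hwc : (starRingEnd ℂ) w = w⁻¹ := by
    have := Complex.mul_conj w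
    rw [Complex.normSq_eq_norm_sq, habsw, one_pow, Complex.ofReal_one] at this
    field_simp at this ⊢
    linear_combination this
  have hexpneg : Complex.exp (-(ψ : ℂ) * Complex.I) = w⁻¹ := by
    rw [hwdef, ← Complex.exp_neg]; ring_nf
  have hexp2 : Complex.exp (2 * θ * Complex.I) = z ^ 2 := by
    rw [hzdef, ← Complex.exp_nat_mul]; ring_nf
  refine ⟨r * Complex.normSq (w + z) / Complex.normSq (z - (r : ℂ)), div_nonneg (mul_nonneg hr.le (Complex.normSq_nonneg _)) (Complex.normSq_nonneg _), ?_⟩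
  have h1 : ((Complex.normSq (w + z) : ℝ) : ℂ) = (w + z) * (w⁻¹ + z⁻¹) := by
    rw [← Complex.mul_conj (w + z), map_add, hzc, hwc]
  have h2 : ((Complex.normSq (z - (r : ℂ)) : ℝ) : ℂ) = (z - r) * (z⁻¹ - r) := by
    rw [← Complex.mul_conj (z - r), map_sub, hzc, Complex.conj_ofReal]
  have hnsq2 : Complex.normSq (z - (r : ℂ)) ≠ 0 := by
    simpa [Complex.normSq_eq_zero] using hzr
  have hwinv : w⁻¹ * w = 1 := inv_mul_cancel₀ hw0
  have h1' : ((Complex.normSq (w + z) : ℝ) : ℂ) * (w * z) = (w + z) ^ 2 := by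
    rw [h1]; field_simp; ring
  have h2' : ((Complex.normSq (z - (r : ℂ)) : ℝ) : ℂ) * z = -(r:ℂ) * (z - r) * (z - 1/(r:ℂ)) := by
    rw [h2]; field_simp; ring
  have hden : z ^ 2 * (z - (r:ℂ)) * (z - 1/(r:ℂ)) ≠ 0 :=
    mul_ne_zero (mul_ne_zero (pow_ne_zero _ hz0) hzr) hz1r
  have hnsq2' : ((Complex.normSq (z - (r:ℂ)) : ℝ) : ℂ) ≠ 0 := by exact_mod_cast hnsq2
  have key : -(w⁻¹) * (w + z) ^ 2 = -(((Complex.normSq (w + z) : ℝ) : ℂ) * z) := by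
    rw [← h1']; field_simp
  rw [hexpneg, hexp2]
  push_cast
  rw [div_mul_eq_mul_div, key, div_eq_div_iff hden hnsq2']
  linear_combination (-((Complex.normSq (w + z) : ℝ) : ℂ) * z ^ 2) * h2'
end

section
/- Let $0<r<1$, $\beta = ie^{i\psi/2}$, and $x(\zeta) = \beta\operatorname{Log}\frac{\zeta+i\sqrt{r}}{\zeta-i\sqrt{r}} - \overline{\beta}\operatorname{Log}\frac{1-i\sqrt{r}\zeta}{1+i\sqrt{r}\zeta}$ with principal branch logarithms. Then $\operatorname{Re}(x(\zeta)) = 0$ for every $\zeta$ with $|\zeta|=1$. -/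
open Complex

/-- The real part of the primitive `x` vanishes on the unit circle. -/
theorem stmt7 (r ψ : ℝ) (hr0 : 0 < r) (hr1 : r < 1) (ζ : ℂ) (hζ : ‖ζ‖ = 1) :
    (Complex.I * Complex.exp ((ψ : ℂ) / 2 * Complex.I) *
        Complex.log ((ζ + Complex.I * (Real.sqrt r : ℂ)) / (ζ - Complex.I * (Real.sqrt r : ℂ)))
      - (starRingEnd ℂ) (Complex.I * Complex.exp ((ψ : ℂ) / 2 * Complex.I)) *
        Complex.log ((1 - Complex.I * (Real.sqrt r : ℂ) * ζ) /
          (1 + Complex.I * (Real.sqrt r : ℂ) * ζ))).re = 0 := by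
  set s : ℝ := Real.sqrt r with hs
  have hs0 : 0 < s := Real.sqrt_pos.mpr hr0
  have hs1 : s < 1 := by
    rw [hs, show (1:ℝ) = Real.sqrt 1 by simp]
    exact Real.sqrt_lt_sqrt (le_of_lt hr0) hr1
  have hnormsq : ζ.re * ζ.re + ζ.im * ζ.im = 1 := by
    have := Complex.normSq_eq_norm_sq ζ
    rw [hζ] at this
    simpa [Complex.normSq_apply] using this
  have hζconj : (starRingEnd ℂ) ζ * ζ = 1 := by
    have hn : Complex.normSq ζ = 1 := by simpa [Complex.normSq_apply] using hnormsq
    rw [mul_comm, Complex.mul_conj, hn]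
    simp
  -- denominators nonzero
  have hden1 : ζ - Complex.I * (s : ℂ) ≠ 0 := by
    intro h
    have hz : ζ = Complex.I * (s : ℂ) := by linear_combination h
    rw [hz] at hζ
    simp at hζ
    rw [_root_.abs_of_nonneg hs0.le] at hζ
    linarith
  have hden2 : (1 : ℂ) + Complex.I * (s : ℂ) * ζ ≠ 0 := by
    intro h
    have h1 : Complex.I * (s : ℂ) * ζ = -1 := by linear_combination h
    have h2 : ‖Complex.I * (s : ℂ) * ζ‖ = s := by
      simp [hζ]
      exact hs0.le
    rw [h1] at h2
    simp at h2
    linarith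
  have hden1' : (starRingEnd ℂ) ζ + Complex.I * (s : ℂ) ≠ 0 := by
    intro h
    apply hden1
    have := congrArg (starRingEnd ℂ) h
    simpa [map_add, map_mul, Complex.conj_I, sub_eq_add_neg, neg_mul] using this
  set w : ℂ := (ζ + Complex.I * (s : ℂ)) / (ζ - Complex.I * (s : ℂ)) with hw
  -- conjugate of w is the second argument
  have hconjw : (starRingEnd ℂ) w =
      (1 - Complex.I * (s : ℂ) * ζ) / (1 + Complex.I * (s : ℂ) * ζ) := by
    rw [hw, map_div₀]
    have h1 : (starRingEnd ℂ) (ζ + Complex.I * (s:ℂ)) =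
        (starRingEnd ℂ) ζ - Complex.I * (s:ℂ) := by
      simp [map_add, map_mul, Complex.conj_I]; ring
    have h2 : (starRingEnd ℂ) (ζ - Complex.I * (s:ℂ)) =
        (starRingEnd ℂ) ζ + Complex.I * (s:ℂ) := by
      simp [map_sub, map_mul, Complex.conj_I]
    rw [h1, h2, div_eq_div_iff hden1' hden2]
    linear_combination 2 * Complex.I * (s:ℂ) * hζconj
  -- real part of w is positive
  have hre : 0 < w.re := by
    rw [hw, Complex.div_re]
    have hnum : (ζ + Complex.I * (s:ℂ)).re * (ζ - Complex.I * (s:ℂ)).re +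
        (ζ + Complex.I * (s:ℂ)).im * (ζ - Complex.I * (s:ℂ)).im = 1 - s^2 := by
      simp [Complex.add_re, Complex.add_im, Complex.sub_re, Complex.sub_im,
        Complex.mul_re, Complex.mul_im]
      nlinarith [hnormsq]
    rw [show (ζ + Complex.I * (s:ℂ)).re * (ζ - Complex.I * (s:ℂ)).re /
          Complex.normSq (ζ - Complex.I * (s:ℂ)) +
        (ζ + Complex.I * (s:ℂ)).im * (ζ - Complex.I * (s:ℂ)).im /
          Complex.normSq (ζ - Complex.I * (s:ℂ)) =
        ((ζ + Complex.I * (s:ℂ)).re * (ζ - Complex.I * (s:ℂ)).re +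
          (ζ + Complex.I * (s:ℂ)).im * (ζ - Complex.I * (s:ℂ)).im) /
          Complex.normSq (ζ - Complex.I * (s:ℂ)) by ring, hnum]
    have hpos : 0 < Complex.normSq (ζ - Complex.I * (s:ℂ)) :=
      Complex.normSq_pos.mpr hden1
    have h12 : 0 < 1 - s^2 := by nlinarith
    positivity
  have harg : w.arg ≠ Real.pi := by
    intro h
    rw [Complex.arg_eq_pi_iff] at h
    linarith [h.1]
  have hlog : Complex.log ((1 - Complex.I * (s : ℂ) * ζ) /
      (1 + Complex.I * (s : ℂ) * ζ)) = (starRingEnd ℂ) (Complex.log w) := by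
    rw [← hconjw, Complex.log_conj _ harg]
  rw [hlog, ← map_mul]
  simp
end
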